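/- arXiv:cs/0505017 — 2 statements merged into one kernel-verified Lean document; each statement's English description precedes it below -/
import Mathlib

section
/- Let S be a finite planar point set in general position with Delaunay depth function d (d(p) = 1 + graph distance in DT(S) from p to the convex hull vertices). If C is a cycle in the Delaunay triangulation all of whose vertices have depth equal to i, then every point of S lying in the open region bounded by C has depth strictly greater than i. -/
open Metric Set

noncomputable section

abbrev Pt : Type := EuclideanSpace ℝ (Fin 2)

def pt (a b : ℝ) : Pt := WithLp.toLp 2 ![a, b]

/-- General position: no 3 collinear, no 4 cocircular. -/
def GenPos (S : Set Pt) : Prop :=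
  (∀ T ⊆ S, T.ncard = 3 → ¬ Collinear ℝ T) ∧
  (∀ T ⊆ S, T.ncard = 4 → ¬ ∃ (c : Pt) (r : ℝ), ∀ p ∈ T, dist p c = r)

/-- An empty circle through `p` and `q` witnessing Delaunay adjacency. -/
def EmptyCircle (S : Set Pt) (p q : Pt) : Prop :=
  ∃ (c : Pt) (r : ℝ), dist p c = r ∧ dist q c = r ∧
    ∀ s ∈ S, s ≠ p → s ≠ q → r < dist s c

/-- The Delaunay triangulation of `S` viewed as a graph on the plane
(vertices outside `S` are isolated). -/
def DelaunayGraph (S : Set Pt) : SimpleGraph Pt where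
  Adj p q := p ≠ q ∧ p ∈ S ∧ q ∈ S ∧ EmptyCircle S p q
  symm := ⟨by
    rintro p q ⟨hne, hp, hq, c, r, h1, h2, h3⟩
    exact ⟨hne.symm, hq, hp, c, r, h2, h1, fun s hs h1' h2' => h3 s hs h2' h1'⟩⟩
  loopless := ⟨fun p h => h.1 rfl⟩

lemma gp_triple {S : Set Pt} (hgp : GenPos S) {x a b : Pt} (hx : x ∈ S) (ha : a ∈ S)
    (hb : b ∈ S) (hxa : x ≠ a) (hxb : x ≠ b) (hab : a ≠ b)
    (hcol : Collinear ℝ ({x, a, b} : Set Pt)) : False :=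
  hgp.1 {x, a, b} (by intro z hz; rcases hz with rfl | rfl | rfl <;> assumption)
    (Set.ncard_eq_three.mpr ⟨x, a, b, hxa, hxb, hab, rfl⟩) hcol

lemma seg_collinear {a b x : Pt} (h : x ∈ segment ℝ a b) : Collinear ℝ ({x, a, b} : Set Pt) := by
  have := (mem_segment_iff_wbtw.mp h).collinear
  exact this.subset (by intro z hz; rcases hz with rfl | rfl | rfl <;> simp)

lemma notOnSeg {S : Set Pt} (hgp : GenPos S) {a b x : Pt} (ha : a ∈ S) (hb : b ∈ S)
    (hx : x ∈ S) (hab : a ≠ b) (hmem : x ∈ segment ℝ a b) : x = a ∨ x = b := by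
  by_contra h
  push_neg at h
  exact gp_triple hgp hx ha hb h.1 h.2 hab (seg_collinear hmem)

lemma convex_comb_neg {u v x y : ℝ} (hu : 0 ≤ u) (hv : 0 ≤ v) (huv : u + v = 1)
    (hx : x < 0) (hy : y < 0) : u * x + v * y < 0 := by
  have hm : max x y < 0 := max_lt hx hy
  calc u * x + v * y ≤ u * max x y + v * max x y :=
        add_le_add (mul_le_mul_of_nonneg_left (le_max_left _ _) hu)
          (mul_le_mul_of_nonneg_left (le_max_right _ _) hv)
    _ = max x y := by rw [← add_mul, huv, one_mul]
    _ < 0 := hm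

/-- Planarity: two Delaunay edges with disjoint vertex sets have disjoint segments. -/
lemma delaunay_disjoint {S : Set Pt} {p q a b : Pt}
    (hpq : (DelaunayGraph S).Adj p q) (hab : (DelaunayGraph S).Adj a b)
    (h1 : a ≠ p) (h2 : a ≠ q) (h3 : b ≠ p) (h4 : b ≠ q) :
    ∀ x, x ∈ segment ℝ p q → x ∉ segment ℝ a b := by
  obtain ⟨-, hpS, hqS, c1, r1, e1p, e1q, e1⟩ := hpq
  obtain ⟨-, haS, hbS, c2, r2, e2a, e2b, e2⟩ := hab
  set F : Pt → ℝ := fun x => ‖x - c1‖ ^ 2 - r1 ^ 2 - ‖x - c2‖ ^ 2 + r2 ^ 2 with hFdef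
  have hF : ∀ x : Pt, F x = 2 * (inner ℝ x c2 : ℝ) - 2 * (inner ℝ x c1 : ℝ)
      + (‖c1‖ ^ 2 - ‖c2‖ ^ 2 - r1 ^ 2 + r2 ^ 2) := by
    intro x
    simp only [hFdef, norm_sub_sq_real]
    ring
  have key : ∀ (u v : ℝ) (x y : Pt), u + v = 1 → F (u • x + v • y) = u * F x + v * F y := by
    intro u v x y huv
    simp only [hF, inner_add_left, real_inner_smul_left]
    linear_combination (‖c2‖ ^ 2 - ‖c1‖ ^ 2 + r1 ^ 2 - r2 ^ 2) * huv
  have hr2 : 0 ≤ r2 := e2a ▸ dist_nonneg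
  have hr1 : 0 ≤ r1 := e1p ▸ dist_nonneg
  have hFp : F p < 0 := by
    have h1' : ‖p - c1‖ = r1 := e1p
    have h2' : r2 < ‖p - c2‖ := e2 p hpS h1.symm h3.symm
    simp only [hFdef]
    nlinarith
  have hFq : F q < 0 := by
    have h1' : ‖q - c1‖ = r1 := e1q
    have h2' : r2 < ‖q - c2‖ := e2 q hqS h2.symm h4.symm
    simp only [hFdef]
    nlinarith
  have hFa : 0 < F a := by
    have h1' : ‖a - c2‖ = r2 := e2a
    have h2' : r1 < ‖a - c1‖ := e1 a haS h1 h2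
    simp only [hFdef]
    nlinarith
  have hFb : 0 < F b := by
    have h1' : ‖b - c2‖ = r2 := e2b
    have h2' : r1 < ‖b - c1‖ := e1 b hbS h3 h4
    simp only [hFdef]
    nlinarith
  rintro x ⟨u, v, hu, hv, huv, rfl⟩ ⟨u', v', hu', hv', huv', hx⟩
  have hneg : F (u • p + v • q) < 0 := by
    rw [key u v p q huv]; exact convex_comb_neg hu hv huv hFp hFq
  have hpos : 0 < F (u' • a + v' • b) := by
    rw [key u' v' a b huv']
    have := convex_comb_neg hu' hv' huv' (neg_neg_of_pos hFa) (neg_neg_of_pos hFb)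
    nlinarith
  rw [hx] at hpos
  linarith

/-- `p` is a vertex of the convex hull of `S`. -/
def HullVertex (S : Set Pt) (p : Pt) : Prop :=
  p ∈ S ∧ p ∉ convexHull ℝ (S \ {p})

lemma exists_hullVertex {S : Set Pt} (hfin : S.Finite) (hne : S.Nonempty) :
    ∃ h, HullVertex S h := by
  obtain ⟨t, ht⟩ : ∃ t : ℝ, ∀ s ∈ S, ∀ s' ∈ S, s ≠ s' →
      s 0 + t * s 1 ≠ s' 0 + t * s' 1 := by
    have hBfin : ((fun p : Pt × Pt => (p.2 0 - p.1 0) / (p.1 1 - p.2 1)) '' (S ×ˢ S)).Finite :=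
      (hfin.prod hfin).image _
    obtain ⟨t, ht⟩ := hBfin.exists_notMem
    refine ⟨t, fun s hs s' hs' hne' heq => ?_⟩
    have h1 : s 1 ≠ s' 1 := by
      intro h11
      have h00 : s 0 = s' 0 := by
        rw [h11] at heq; linarith
      apply hne'
      ext i
      fin_cases i
      · exact h00
      · exact h11
    exact ht ⟨(s, s'), ⟨hs, hs'⟩, by
      rw [div_eq_iff (sub_ne_zero.mpr h1)]; linarith⟩
  obtain ⟨p, hpS, hpmax⟩ := Set.exists_max_image S (fun x : Pt => x 0 + t * x 1) hfin hne
  refine ⟨p, hpS, fun hp => ?_⟩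
  have hlin : IsLinearMap ℝ (fun x : Pt => x 0 + t * x 1) := by
    constructor
    · intro a b; show (a + b) 0 + t * (a + b) 1 = _
      simp only [PiLp.add_apply]; ring
    · intro c a; show (c • a) 0 + t * (c • a) 1 = _
      simp only [PiLp.smul_apply, smul_eq_mul]; ring
  have hH : Convex ℝ {x : Pt | x 0 + t * x 1 < p 0 + t * p 1} :=
    convex_halfSpace_lt hlin _
  have hsub : S \ {p} ⊆ {x : Pt | x 0 + t * x 1 < p 0 + t * p 1} := by
    rintro s ⟨hsS, hsp⟩
    exact lt_of_le_of_ne (hpmax s hsS) (ht s hsS p hpS (by simpa using hsp))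
  have := convexHull_min hsub hH hp
  simp at this

/-- Delaunay depth of a point of `S`: one plus the graph distance in the
Delaunay triangulation to the set of convex-hull vertices. -/
def delaunayDepth (S : Set Pt) (p : Pt) : ℕ :=
  1 + sInf {d : ℕ | ∃ h : Pt, HullVertex S h ∧ (DelaunayGraph S).dist p h = d}

/-- Delaunay depth of a query point `p` relative to `S`: its depth in `S ∪ {p}`. -/
def relDepth (S : Set Pt) (p : Pt) : ℕ := delaunayDepth (insert p S) p

/-- The segment corresponding to an (unordered) edge. -/
def edgeSeg (e : Sym2 Pt) : Set Pt :=
  Sym2.lift ⟨fun a b => segment ℝ a b, fun a b => segment_symm ℝ a b⟩ e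

/-- The closed polygonal curve drawn by a closed walk of the graph. -/
def walkCurve {G : SimpleGraph Pt} {p : Pt} (w : G.Walk p p) : Set Pt :=
  ⋃ e ∈ w.edges, edgeSeg e

/-- `x` lies in the bounded open region enclosed by the curve. -/
def InsideCurve (curve : Set Pt) (x : Pt) : Prop :=
  x ∉ curve ∧ Bornology.IsBounded (connectedComponentIn curveᶜ x)

lemma edgeSeg_mk (a b : Pt) : edgeSeg s(a, b) = segment ℝ a b := rfl

lemma mem_walkCurve {G : SimpleGraph Pt} {p : Pt} {w : G.Walk p p} {x : Pt} :
    x ∈ walkCurve w ↔ ∃ e ∈ w.edges, x ∈ edgeSeg e := by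
  simp [walkCurve]

lemma walk_support_mem {S : Set Pt} {p r : Pt} (W : (DelaunayGraph S).Walk p r)
    (hp : p ∈ S) : ∀ u ∈ W.support, u ∈ S := by
  induction W with
  | nil => intro u hu; simp at hu; subst hu; exact hp
  | cons h W ih =>
    intro u hu
    rw [SimpleGraph.Walk.support_cons, List.mem_cons] at hu
    rcases hu with rfl | hu
    · exact hp
    · exact ih h.2.2.1 u hu

lemma support_mem_edge {G : SimpleGraph Pt} :
    ∀ {x y : Pt} (W : G.Walk x y), 0 < W.length → ∀ u ∈ W.support,
      ∃ a b, s(a, b) ∈ W.edges ∧ (u = a ∨ u = b) := by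
  intro x y W
  induction W with
  | nil => intro h; simp at h
  | @cons x' y' z' h W ih =>
    intro _ u hu
    rw [SimpleGraph.Walk.support_cons, List.mem_cons] at hu
    rcases hu with rfl | hu
    · exact ⟨u, y', by simp [SimpleGraph.Walk.edges_cons], Or.inl rfl⟩
    · rcases Nat.eq_zero_or_pos W.length with h0 | h0
      · have : u = y' := by
          cases W with
          | nil => simpa using hu
          | cons h' W' => simp [SimpleGraph.Walk.length_cons] at h0
        exact ⟨x', y', by simp [SimpleGraph.Walk.edges_cons], Or.inr this⟩
      · obtain ⟨a, b, he, hab⟩ := ih h0 u hu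
        exact ⟨a, b, by simp [SimpleGraph.Walk.edges_cons, he], hab⟩

lemma support_mem_curve {S : Set Pt} {v : Pt} {w : (DelaunayGraph S).Walk v v}
    (hlen : 0 < w.length) : ∀ u ∈ w.support, u ∈ walkCurve w := by
  intro u hu
  obtain ⟨a, b, he, hab⟩ := support_mem_edge w hlen u hu
  refine mem_walkCurve.mpr ⟨s(a, b), he, ?_⟩
  rw [edgeSeg_mk]
  rcases hab with rfl | rfl
  · exact left_mem_segment ℝ _ _
  · exact right_mem_segment ℝ _ _

/-- A point of S on the curve is a support vertex. -/
lemma curve_mem_support {S : Set Pt} (hgp : GenPos S) {v : Pt}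
    {w : (DelaunayGraph S).Walk v v} {x : Pt} (hx : x ∈ S) (hc : x ∈ walkCurve w) :
    x ∈ w.support := by
  obtain ⟨e, he, hxe⟩ := mem_walkCurve.mp hc
  induction e using Sym2.ind with
  | _ a b =>
    have hadj : (DelaunayGraph S).Adj a b :=
      (DelaunayGraph S).mem_edgeSet.mp (w.edges_subset_edgeSet he)
    rw [edgeSeg_mk] at hxe
    rcases notOnSeg hgp hadj.2.1 hadj.2.2.1 hx hadj.1 hxe with h | h
    · rw [h]; exact w.fst_mem_support_of_mem_edges he
    · rw [h]; exact w.snd_mem_support_of_mem_edges he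

/-- A Delaunay edge avoiding the cycle's vertices avoids the curve. -/
lemma seg_avoids_curve {S : Set Pt} (hgp : GenPos S) {v : Pt}
    {w : (DelaunayGraph S).Walk v v} {x y : Pt}
    (hadj : (DelaunayGraph S).Adj x y)
    (hx : x ∉ w.support) (hy : y ∉ w.support) :
    ∀ z ∈ segment ℝ x y, z ∉ walkCurve w := by
  intro z hz hzc
  obtain ⟨e, he, hze⟩ := mem_walkCurve.mp hzc
  induction e using Sym2.ind with
  | _ a b =>
    have hadj' : (DelaunayGraph S).Adj a b :=
      (DelaunayGraph S).mem_edgeSet.mp (w.edges_subset_edgeSet he)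
    have ha := w.fst_mem_support_of_mem_edges he
    have hb := w.snd_mem_support_of_mem_edges he
    rw [edgeSeg_mk] at hze
    exact delaunay_disjoint hadj' hadj
      (fun h => hx (by rw [h]; exact ha)) (fun h => hx (by rw [h]; exact hb))
      (fun h => hy (by rw [h]; exact ha)) (fun h => hy (by rw [h]; exact hb)) z hze hz

/-- Any point inside the curve lies in the convex hull of the cycle's vertices. -/
lemma inside_subset_hull {S : Set Pt} {v : Pt} {w : (DelaunayGraph S).Walk v v} {x : Pt}
    (hx : InsideCurve (walkCurve w) x) : x ∈ convexHull ℝ {u | u ∈ w.support} := by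
  by_contra hxK
  set K : Set Pt := convexHull ℝ {u | u ∈ w.support} with hKdef
  have hKfin : Set.Finite {u | u ∈ w.support} := w.support.finite_toSet
  have hKcl : IsClosed K := (hKfin.isCompact_convexHull ℝ).isClosed
  have hKcv : Convex ℝ K := convex_convexHull ℝ _
  obtain ⟨f, u, hfK, hfx⟩ := geometric_hahn_banach_closed_point hKcv hKcl hxK
  have hcurve : walkCurve w ⊆ K := by
    intro z hz
    obtain ⟨e, he, hze⟩ := mem_walkCurve.mp hz
    induction e using Sym2.ind with
    | _ a b =>
      rw [edgeSeg_mk] at hze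
      exact segment_subset_convexHull (s := {u | u ∈ w.support})
        (w.fst_mem_support_of_mem_edges he) (w.snd_mem_support_of_mem_edges he) hze
  set H : Set Pt := {y | u < f y} with hHdef
  have hHcv : Convex ℝ H := convex_halfSpace_gt ⟨fun a b => map_add f a b, fun c a => map_smul f c a⟩ u
  have hHsub : H ⊆ (walkCurve w)ᶜ := by
    intro z hz hzc
    exact absurd (hfK z (hcurve hzc)) (not_lt.mpr (le_of_lt hz))
  have hxH : x ∈ H := hfx
  have hHcc : H ⊆ connectedComponentIn (walkCurve w)ᶜ x :=
    hHcv.isPreconnected.subset_connectedComponentIn hxH hHsub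
  obtain ⟨C, hC⟩ := isBounded_iff_forall_norm_le.mp (hx.2.subset hHcc)
  have hCx : ‖x‖ ≤ C := hC x hxH
  -- the ray from x in direction x - v stays in H
  have hvK : v ∈ K := subset_convexHull ℝ _ (w.start_mem_support)
  have hfv : f v < u := hfK v hvK
  have hxv : x - v ≠ 0 := by
    intro h
    have : x = v := by rwa [sub_eq_zero] at h
    rw [this] at hfx; linarith
  have hnorm : 0 < ‖x - v‖ := norm_pos_iff.mpr hxv
  set t : ℝ := (C + ‖x‖ + 1) / ‖x - v‖ with htdef
  have ht0 : 0 ≤ t := div_nonneg (by linarith [norm_nonneg x]) hnorm.le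
  have hyH : x + t • (x - v) ∈ H := by
    have hlin : f (x + t • (x - v)) = f x + t * (f x - f v) := by
      simp only [map_add, map_smul, map_sub, smul_eq_mul]; try ring
    rw [hHdef]
    simp only [Set.mem_setOf_eq, hlin]
    nlinarith
  have hC' := hC _ hyH
  have h1 : t * ‖x - v‖ = C + ‖x‖ + 1 := by
    rw [htdef, div_mul_cancel₀ _ hnorm.ne']
  have h2 : ‖t • (x - v)‖ ≤ ‖x + t • (x - v)‖ + ‖x‖ := by
    simpa using norm_sub_le (x + t • (x - v)) x
  have h3 : ‖t • (x - v)‖ = t * ‖x - v‖ := by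
    rw [norm_smul, Real.norm_eq_abs, abs_of_nonneg ht0]
  rw [h3, h1] at h2
  linarith

lemma delaunay_reachable {S : Set Pt} (hfin : S.Finite) (hgp : GenPos S) {p q : Pt}
    (hp : p ∈ S) (hq : q ∈ S) : (DelaunayGraph S).Reachable p q := by
  by_contra hnr
  set G := DelaunayGraph S with hG
  set A : Set Pt := {s ∈ S | G.Reachable p s} with hA
  set B : Set Pt := {s ∈ S | ¬ G.Reachable p s} with hB
  have hAfin : A.Finite := hfin.subset (fun s hs => hs.1)
  have hBfin : B.Finite := hfin.subset (fun s hs => hs.1)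
  obtain ⟨⟨a, b⟩, ⟨haA, hbB⟩, hmin⟩ :=
    Set.exists_min_image (A ×ˢ B) (fun z => dist z.1 z.2) (hAfin.prod hBfin)
      ⟨(p, q), ⟨⟨hp, SimpleGraph.Reachable.refl p⟩, ⟨hq, hnr⟩⟩⟩
  have haS : a ∈ S := haA.1
  have hbS : b ∈ S := hbB.1
  have hab : a ≠ b := by
    rintro rfl
    exact hbB.2 haA.2
  set c : Pt := midpoint ℝ a b with hc
  set r : ℝ := dist a b / 2 with hr
  have hrpos : 0 < r := by
    rw [hr]
    have := dist_pos.mpr hab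
    linarith
  have hac : dist a c = r := by
    rw [hc, hr, dist_left_midpoint]
    norm_num
    ring
  have hbc : dist b c = r := by
    rw [hc, midpoint_comm, hr, dist_left_midpoint, dist_comm]
    norm_num
    ring
  have hca : dist c a = r := by rw [dist_comm]; exact hac
  have hcb : dist c b = r := by rw [dist_comm]; exact hbc
  have hcbne : c ≠ b := by
    intro h
    rw [h] at hcb
    simp at hcb
    exact absurd hcb.symm hrpos.ne'
  have hcane : c ≠ a := by
    intro h
    rw [h] at hca
    simp at hca
    exact absurd hca.symm hrpos.ne'
  -- a and b both lie on line[c, b] and line[c, a]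
  have hmem_a_cb : a ∈ affineSpan ℝ ({c, b} : Set Pt) :=
    (wbtw_midpoint ℝ a b).collinear.mem_affineSpan_of_mem_of_ne
      (by simp [hc]) (by simp) (by simp) hcbne
  have hmem_b_ca : b ∈ affineSpan ℝ ({c, a} : Set Pt) :=
    (wbtw_midpoint ℝ a b).collinear.mem_affineSpan_of_mem_of_ne
      (by simp [hc]) (by simp) (by simp) hcane
  have hempty : ∀ s ∈ S, s ≠ a → s ≠ b → r < dist s c := by
    intro s hsS hsa hsb
    by_contra hle
    push_neg at hle
    have key1 : dist s a ≤ dist a b := by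
      calc dist s a ≤ dist s c + dist c a := dist_triangle s c a
        _ ≤ r + r := by linarith [hle, hca.le]
        _ = dist a b := by rw [hr]; ring
    have key2 : dist s b ≤ dist a b := by
      calc dist s b ≤ dist s c + dist c b := dist_triangle s c b
        _ ≤ r + r := by linarith [hle, hcb.le]
        _ = dist a b := by rw [hr]; ring
    by_cases hreach : G.Reachable p s
    · -- s ∈ A, so (s, b) is a closer pair unless equality
      have hge : dist a b ≤ dist s b := hmin (s, b) ⟨⟨hsS, hreach⟩, hbB⟩
      have heq : dist s b = dist a b := le_antisymm key2 hge
      have hsc : dist s c = r := by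
        have h1 : dist s b ≤ dist s c + dist c b := dist_triangle s c b
        rw [heq] at *
        have : dist a b = 2 * r := by rw [hr]; ring
        linarith
      have htri : dist s c + dist c b = dist s b := by
        rw [hsc, hcb, heq, hr]; ring
      have hwb : Wbtw ℝ s c b := dist_add_dist_eq_iff.mp htri
      have hmem_s : s ∈ affineSpan ℝ ({c, b} : Set Pt) :=
        hwb.collinear.mem_affineSpan_of_mem_of_ne (by simp) (by simp) (by simp) hcbne
      exact gp_triple hgp hsS haS hbS hsa hsb hab
        (collinear_triple_of_mem_affineSpan_pair hmem_s hmem_a_cb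
          (right_mem_affineSpan_pair ℝ c b))
    · -- s ∈ B
      have hge : dist a b ≤ dist a s := hmin (a, s) ⟨haA, ⟨hsS, hreach⟩⟩
      have heq : dist s a = dist a b := le_antisymm key1 (by rwa [dist_comm s a])
      have hsc : dist s c = r := by
        have h1 : dist s a ≤ dist s c + dist c a := dist_triangle s c a
        have : dist a b = 2 * r := by rw [hr]; ring
        linarith
      have htri : dist s c + dist c a = dist s a := by
        rw [hsc, hca, heq, hr]; ring
      have hwb : Wbtw ℝ s c a := dist_add_dist_eq_iff.mp htri
      have hmem_s : s ∈ affineSpan ℝ ({c, a} : Set Pt) :=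
        hwb.collinear.mem_affineSpan_of_mem_of_ne (by simp) (by simp) (by simp) hcane
      exact gp_triple hgp hsS hbS haS hsb hsa hab.symm
        (collinear_triple_of_mem_affineSpan_pair hmem_s hmem_b_ca
          (right_mem_affineSpan_pair ℝ c a))
  have hadj : G.Adj a b := ⟨hab, haS, hbS, c, r, hac, hbc, hempty⟩
  exact hbB.2 (haA.2.trans hadj.reachable)

lemma walk_in_component {S : Set Pt} (hgp : GenPos S) {v : Pt}
    {w : (DelaunayGraph S).Walk v v} {q : Pt} :
    ∀ {x h : Pt} (W' : (DelaunayGraph S).Walk x h),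
      (∀ u ∈ W'.support, u ∉ w.support) →
      x ∈ connectedComponentIn (walkCurve w)ᶜ q →
      h ∈ connectedComponentIn (walkCurve w)ᶜ q := by
  intro x h W'
  induction W' with
  | nil => exact fun _ hx => hx
  | @cons x' y' z' hadj W'' ih =>
    intro hav hx
    have hxs : x' ∉ w.support := hav x' (by simp [SimpleGraph.Walk.support_cons])
    have hys : y' ∉ w.support :=
      hav y' (by simp [SimpleGraph.Walk.support_cons, W''.start_mem_support])
    have hseg : segment ℝ x' y' ⊆ (walkCurve w)ᶜ :=
      fun z hz => seg_avoids_curve hgp hadj hxs hys z hz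
    have hCCeq : connectedComponentIn (walkCurve w)ᶜ q
        = connectedComponentIn (walkCurve w)ᶜ x' := connectedComponentIn_eq hx
    have hsub : segment ℝ x' y' ⊆ connectedComponentIn (walkCurve w)ᶜ x' :=
      (convex_segment x' y').isPreconnected.subset_connectedComponentIn
        (left_mem_segment ℝ x' y') hseg
    refine ih (fun u hu => hav u (by simp [SimpleGraph.Walk.support_cons, hu])) ?_
    rw [hCCeq]
    exact hsub (right_mem_segment ℝ x' y')

/-- Points of `S` inside a cycle of depth-`i` points have depth greater than `i`. -/
theorem stmt2 (S : Set Pt) (hfin : S.Finite) (hgp : GenPos S) (i : ℕ)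
    (v : Pt) (w : (DelaunayGraph S).Walk v v) (hcyc : w.IsCycle)
    (hdepth : ∀ u ∈ w.support, delaunayDepth S u = i)
    (q : Pt) (hq : q ∈ S) (hin : InsideCurve (walkCurve w) q) :
    i < delaunayDepth S q := by
  classical
  have hlen : 0 < w.length := lt_of_lt_of_le (by norm_num) hcyc.three_le_length
  have hsupS : ∀ u ∈ w.support, u ∈ S := by
    intro u hu
    obtain ⟨a, b, he, hab⟩ := support_mem_edge w hlen u hu
    have hadj := (DelaunayGraph S).mem_edgeSet.mp (w.edges_subset_edgeSet he)
    rcases hab with rfl | rfl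
    · exact hadj.2.1
    · exact hadj.2.2.1
  have hqs : q ∉ w.support := fun h => hin.1 (support_mem_curve hlen q h)
  have hi1 : 1 ≤ i := by
    have := hdepth v w.start_mem_support
    rw [delaunayDepth] at this
    omega
  obtain ⟨h0, hh0⟩ := exists_hullVertex hfin ⟨q, hq⟩
  -- the crucial bound
  have key : ∀ h : Pt, HullVertex S h → i ≤ (DelaunayGraph S).dist q h := by
    intro h hh
    have hreach : (DelaunayGraph S).Reachable q h := delaunay_reachable hfin hgp hq hh.1
    obtain ⟨W, hWlen⟩ := hreach.exists_walk_length_eq_dist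
    have hcross : ∃ c ∈ W.support, c ∈ w.support := by
      by_contra hno
      push_neg at hno
      have hhCC : h ∈ connectedComponentIn (walkCurve w)ᶜ q :=
        walk_in_component hgp W hno (mem_connectedComponentIn hin.1)
      have hhs : h ∉ w.support := hno h W.end_mem_support
      have hhc : h ∉ walkCurve w := fun hc => hhs (curve_mem_support hgp hh.1 hc)
      have hhin : InsideCurve (walkCurve w) h :=
        ⟨hhc, by rw [← connectedComponentIn_eq hhCC]; exact hin.2⟩
      have := inside_subset_hull hhin
      have hsub2 : {u | u ∈ w.support} ⊆ S \ {h} := by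
        intro u hu
        refine ⟨hsupS u hu, ?_⟩
        intro hud
        simp only [Set.mem_singleton_iff] at hud
        exact hhs (hud ▸ hu)
      exact hh.2 (convexHull_mono hsub2 this)
    obtain ⟨c, hcW, hcw⟩ := hcross
    have hqc : q ≠ c := fun h' => hqs (h' ▸ hcw)
    have hsplit : (W.takeUntil c hcW).length + (W.dropUntil c hcW).length = W.length := by
      have := congrArg SimpleGraph.Walk.length (W.take_spec hcW)
      rwa [SimpleGraph.Walk.length_append] at this
    have h1 : 1 ≤ (W.takeUntil c hcW).length := by
      rcases Nat.eq_zero_or_pos (W.takeUntil c hcW).length with h0' | h0'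
      · exact absurd (SimpleGraph.Walk.eq_of_length_eq_zero h0') hqc
      · exact h0'
    have h2 : (DelaunayGraph S).dist c h ≤ (W.dropUntil c hcW).length :=
      SimpleGraph.dist_le _
    have h3 : sInf {d : ℕ | ∃ h' : Pt, HullVertex S h' ∧ (DelaunayGraph S).dist c h' = d}
        ≤ (DelaunayGraph S).dist c h := Nat.sInf_le ⟨h, hh, rfl⟩
    have h4 := hdepth c hcw
    rw [delaunayDepth] at h4
    omega
  rw [delaunayDepth]
  have hne : {d : ℕ | ∃ h : Pt, HullVertex S h ∧ (DelaunayGraph S).dist q h = d}.Nonempty :=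
    ⟨_, h0, hh0, rfl⟩
  obtain ⟨h', hh', hd'⟩ := Nat.sInf_mem hne
  have := key h' hh'
  omega
end
end

section
/- Let x₁ < x₂ < ⋯ < xₙ be positive reals and S = {(±xᵢ,0),(0,±xᵢ) : 1 ≤ i ≤ n}. Then the Delaunay depth of the origin p = (0,0) in S ∪ {p} equals n + 1; that is, the graph distance in the Delaunay triangulation of S ∪ {p} from p to the convex hull vertices of S ∪ {p} is n. -/
open Metric Set

noncomputable section

/-- The element-uniqueness gadget: the four points `(±xᵢ,0), (0,±xᵢ)` for each `i`. -/
def gadget (n : ℕ) (x : Fin n → ℝ) : Set Pt :=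
  ⋃ i : Fin n, {pt (x i) 0, pt (-(x i)) 0, pt 0 (x i), pt 0 (-(x i))}

lemma pt_zero (a b : ℝ) : pt a b 0 = a := rfl
lemma pt_one (a b : ℝ) : pt a b 1 = b := rfl
lemma pt_eta (v : Pt) : v = pt (v 0) (v 1) := by ext i; fin_cases i <;> rfl
lemma pt_inj {a b c d : ℝ} : pt a b = pt c d ↔ a = c ∧ b = d := by
  constructor
  · intro h; exact ⟨congrArg (fun v : Pt => v 0) h, congrArg (fun v : Pt => v 1) h⟩
  · rintro ⟨rfl, rfl⟩; rfl
lemma dist_pt (a b c d : ℝ) : dist (pt a b) (pt c d) = Real.sqrt ((a-c)^2+(b-d)^2) := by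
  rw [EuclideanSpace.dist_eq, Fin.sum_univ_two]
  simp [pt_zero, pt_one, Real.dist_eq, sq_abs]
lemma dist_coord (q c : Pt) : dist q c = Real.sqrt ((q 0 - c 0)^2 + (q 1 - c 1)^2) := by
  conv_lhs => rw [pt_eta q, pt_eta c]
  rw [dist_pt]
lemma dist_sq (q c : Pt) : (dist q c)^2 = (q 0 - c 0)^2 + (q 1 - c 1)^2 := by
  rw [dist_coord, Real.sq_sqrt (by positivity)]
lemma dist_le_of {q c : Pt} {r : ℝ} (hr : 0 ≤ r)
    (h : (q 0 - c 0)^2 + (q 1 - c 1)^2 ≤ r^2) : dist q c ≤ r := by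
  rw [dist_coord]
  calc Real.sqrt ((q 0 - c 0)^2 + (q 1 - c 1)^2) ≤ Real.sqrt (r^2) := Real.sqrt_le_sqrt h
  _ = r := Real.sqrt_sq hr
lemma lt_dist_of {q c : Pt} {r : ℝ} (hr : 0 ≤ r)
    (h : r^2 < (q 0 - c 0)^2 + (q 1 - c 1)^2) : r < dist q c := by
  rw [dist_coord]; exact (Real.lt_sqrt hr).2 h
lemma dist_eq_of {q c : Pt} {r : ℝ} (hr : 0 ≤ r)
    (h : (q 0 - c 0)^2 + (q 1 - c 1)^2 = r^2) : dist q c = r := by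
  rw [dist_coord, h, Real.sqrt_sq hr]
lemma mem_S_iff {n : ℕ} {x : Fin n → ℝ} {q : Pt} :
    q ∈ insert (pt 0 0) (gadget n x) ↔ q = pt 0 0 ∨ ∃ i, q = pt (x i) 0 ∨
      q = pt (-(x i)) 0 ∨ q = pt 0 (x i) ∨ q = pt 0 (-(x i)) := by
  simp [gadget, Set.mem_insert_iff, Set.mem_iUnion]

open Classical in
noncomputable def fidx (n : ℕ) (x : Fin n → ℝ) (q : Pt) : ℕ :=
  (Finset.univ.filter fun k => x k ≤ |q 0| + |q 1|).card

lemma fidx_le {n : ℕ} {x : Fin n → ℝ} (q : Pt) : fidx n x q ≤ n := by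
  classical
  refine (Finset.card_filter_le _ _).trans ?_
  simp


-- axis data for members of S
lemma axis_of_mem {n : ℕ} {x : Fin n → ℝ} (hpos : ∀ i, 0 < x i) {q : Pt}
    (hq : q ∈ insert (pt 0 0) (gadget n x)) :
    q 0 * q 1 = 0 := by
  rcases mem_S_iff.mp hq with rfl | ⟨i, rfl | rfl | rfl | rfl⟩ <;>
    simp [pt_zero, pt_one]


set_option maxHeartbeats 2000000 in
lemma adj_consec {n : ℕ} {x : Fin n → ℝ} (hpos : ∀ i, 0 < x i)
    (d0 d1 s t : ℝ)
    (hd : (d0 = 1 ∧ d1 = 0) ∨ (d0 = -1 ∧ d1 = 0) ∨ (d0 = 0 ∧ d1 = 1) ∨ (d0 = 0 ∧ d1 = -1))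
    (hs : s = 0 ∨ ∃ i, s = x i) (ht : ∃ i, t = x i) (hst : s < t)
    (hgap : ∀ i, x i ≤ s ∨ t ≤ x i) :
    (DelaunayGraph (insert (pt 0 0) (gadget n x))).Adj (pt (s*d0) (s*d1)) (pt (t*d0) (t*d1)) := by
  have hs0 : 0 ≤ s := by
    rcases hs with rfl | ⟨i, rfl⟩
    · exact le_refl 0
    · exact (hpos i).le
  have ht0 : 0 < t := lt_of_le_of_lt hs0 hst
  have hdn : d0^2 + d1^2 = 1 := by
    rcases hd with ⟨h1, h2⟩ | ⟨h1, h2⟩ | ⟨h1, h2⟩ | ⟨h1, h2⟩ <;> subst h1 <;> subst h2 <;> norm_num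
  have hr0 : (0:ℝ) ≤ (t-s)/2 := by linarith
  have hmem : ∀ w : ℝ, (w = 0 ∨ ∃ i, w = x i) → pt (w*d0) (w*d1) ∈ insert (pt 0 0) (gadget n x) := by
    intro w hw
    rcases hw with rfl | ⟨i, rfl⟩
    · left; rw [zero_mul, zero_mul]
    · right
      rw [gadget, Set.mem_iUnion]
      refine ⟨i, ?_⟩
      rcases hd with ⟨h1, h2⟩ | ⟨h1, h2⟩ | ⟨h1, h2⟩ | ⟨h1, h2⟩ <;> subst h1 <;> subst h2 <;>
        simp [mul_one, mul_zero, mul_neg_one]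
  have hne : pt (s*d0) (s*d1) ≠ pt (t*d0) (t*d1) := by
    intro h
    rw [pt_inj] at h
    have : s = t := by linear_combination d0 * h.1 + d1 * h.2 + (t-s) * hdn
    linarith
  refine ⟨hne, hmem s hs, hmem t (Or.inr ht),
    pt ((s+t)/2*d0) ((s+t)/2*d1), (t-s)/2, ?_, ?_, ?_⟩
  · apply dist_eq_of hr0
    simp only [pt_zero, pt_one]
    linear_combination (s - (s+t)/2)^2 * hdn
  · apply dist_eq_of hr0
    simp only [pt_zero, pt_one]
    linear_combination (t - (s+t)/2)^2 * hdn
  · intro q hq hqa hqb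
    apply lt_dist_of hr0
    rcases mem_S_iff.mp hq with rfl | ⟨i, hform⟩
    · simp only [pt_zero, pt_one]
      have hs' : 0 < s := by
        rcases hs with rfl | ⟨j, hj⟩
        · exact absurd (by rw [zero_mul, zero_mul]) hqa
        · exact hj ▸ hpos j
      nlinarith [mul_pos hs' ht0, hdn, sq_nonneg (s+t)]
    · rcases hform with rfl | rfl | rfl | rfl <;>
        rcases hd with ⟨h1, h2⟩ | ⟨h1, h2⟩ | ⟨h1, h2⟩ | ⟨h1, h2⟩ <;> subst h1 <;> subst h2 <;>
        simp only [pt_zero, pt_one] <;>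
        first
        | nlinarith [hpos i, hst, hs0, ht0, mul_nonneg hs0 ht0.le,
            mul_nonneg hs0 (hpos i).le, mul_nonneg ht0.le (hpos i).le, mul_pos ht0 (hpos i)]
        | (have h1 : x i ≠ s := fun h => hqa (pt_inj.mpr ⟨by linarith, by linarith⟩)
           have h2 : x i ≠ t := fun h => hqb (pt_inj.mpr ⟨by linarith, by linarith⟩)
           rcases hgap i with hg | hg
           · have hlt : x i < s := lt_of_le_of_ne hg h1
             nlinarith [hpos i, hst, hs0,
               mul_pos (sub_pos.2 hlt) (sub_pos.2 (lt_trans hlt hst))]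
           · have hlt : t < x i := lt_of_le_of_ne hg (Ne.symm h2)
             nlinarith [hpos i, hst, hs0,
               mul_pos (sub_pos.2 (lt_trans hst hlt)) (sub_pos.2 hlt)])


set_option maxHeartbeats 2000000 in
lemma adj_step {n : ℕ} {x : Fin n → ℝ} (hpos : ∀ i, 0 < x i) (hmono : StrictMono x)
    (a b : Pt) (hab : (DelaunayGraph (insert (pt 0 0) (gadget n x))).Adj a b) :
    fidx n x b ≤ fidx n x a + 1 := by
  classical
  obtain ⟨hne, haS, hbS, c, r, hra, hrb, hE⟩ := hab
  by_contra hcon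
  push_neg at hcon
  have hfb : fidx n x b ≤ n := fidx_le b
  have hfan : fidx n x a + 1 < n := lt_of_lt_of_le hcon hfb
  set s : ℝ := |a 0| + |a 1| with hsdef
  set v : ℝ := |b 0| + |b 1| with hvdef
  set k : Fin n := ⟨fidx n x a, by omega⟩ with hk
  set u : ℝ := x k with hu
  -- s < u
  have hsu : s < u := by
    by_contra hle
    push_neg at hle
    have hsub : Finset.Iic k ⊆ Finset.univ.filter (fun j => x j ≤ s) := by
      intro j hj
      refine Finset.mem_filter.2 ⟨Finset.mem_univ _, ?_⟩
      exact le_trans (hmono.le_iff_le.2 (Finset.mem_Iic.1 hj)) hle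
    have hcard := Finset.card_le_card hsub
    rw [Fin.card_Iic] at hcard
    have : (Finset.univ.filter (fun j => x j ≤ s)).card = fidx n x a := by
      rw [fidx, hsdef]
    have hkval : (k : ℕ) = fidx n x a := rfl
    omega
  -- u < v
  have huv : u < v := by
    by_contra hle
    push_neg at hle
    have hsub : Finset.univ.filter (fun j => x j ≤ v) ⊆ Finset.Iic k := by
      intro j hj
      refine Finset.mem_Iic.2 ?_
      exact hmono.le_iff_le.1 (le_trans (Finset.mem_filter.1 hj).2 hle)
    have hcard := Finset.card_le_card hsub
    rw [Fin.card_Iic] at hcard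
    have : (Finset.univ.filter (fun j => x j ≤ v)).card = fidx n x b := by
      rw [fidx, hvdef]
    have hkval : (k : ℕ) = fidx n x a := rfl
    omega
  have hs0 : (0:ℝ) ≤ s := by positivity
  have hu0 : (0:ℝ) < u := lt_of_le_of_lt hs0 hsu
  have ha01 : a 0 * a 1 = 0 := axis_of_mem hpos haS
  have hb01 : b 0 * b 1 = 0 := axis_of_mem hpos hbS
  have hr0 : 0 ≤ r := hra ▸ dist_nonneg
  set M : ℝ := max |c 0| |c 1| with hM
  set D : ℝ := (c 0)^2 + (c 1)^2 - r^2 with hD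
  have habs0 : |a 0| * |a 1| = 0 := by rw [← abs_mul, ha01, abs_zero]
  have hbabs0 : |b 0| * |b 1| = 0 := by rw [← abs_mul, hb01, abs_zero]
  have hDa : D ≤ 2*s*M - s^2 := by
    have h1 : r^2 = (a 0 - c 0)^2 + (a 1 - c 1)^2 := by rw [← hra, dist_sq]
    have l1 : a 0 * c 0 ≤ |a 0| * M := by
      calc a 0 * c 0 ≤ |a 0 * c 0| := le_abs_self _
      _ = |a 0| * |c 0| := abs_mul _ _
      _ ≤ |a 0| * M := mul_le_mul_of_nonneg_left (le_max_left _ _) (abs_nonneg _)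
    have l2 : a 1 * c 1 ≤ |a 1| * M := by
      calc a 1 * c 1 ≤ |a 1 * c 1| := le_abs_self _
      _ = |a 1| * |c 1| := abs_mul _ _
      _ ≤ |a 1| * M := mul_le_mul_of_nonneg_left (le_max_right _ _) (abs_nonneg _)
    have hsq : s^2 = (a 0)^2 + (a 1)^2 := by
      rw [hsdef]; nlinarith [sq_abs (a 0), sq_abs (a 1), habs0]
    have hsM : s * M = |a 0| * M + |a 1| * M := by rw [hsdef]; ring
    linarith [l1, l2, h1, hsq, hsM]
  have hDb : D ≤ 2*v*M - v^2 := by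
    have h1 : r^2 = (b 0 - c 0)^2 + (b 1 - c 1)^2 := by rw [← hrb, dist_sq]
    have l1 : b 0 * c 0 ≤ |b 0| * M := by
      calc b 0 * c 0 ≤ |b 0 * c 0| := le_abs_self _
      _ = |b 0| * |c 0| := abs_mul _ _
      _ ≤ |b 0| * M := mul_le_mul_of_nonneg_left (le_max_left _ _) (abs_nonneg _)
    have l2 : b 1 * c 1 ≤ |b 1| * M := by
      calc b 1 * c 1 ≤ |b 1 * c 1| := le_abs_self _
      _ = |b 1| * |c 1| := abs_mul _ _
      _ ≤ |b 1| * M := mul_le_mul_of_nonneg_left (le_max_right _ _) (abs_nonneg _)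
    have hsq : v^2 = (b 0)^2 + (b 1)^2 := by
      rw [hvdef]; nlinarith [sq_abs (b 0), sq_abs (b 1), hbabs0]
    have hsM : v * M = |b 0| * M + |b 1| * M := by rw [hvdef]; ring
    linarith [l1, l2, h1, hsq, hsM]
  -- concavity
  have hUu : D + u^2 ≤ 2*u*M := by
    nlinarith [mul_nonneg (sub_pos.2 huv).le (by linarith : (0:ℝ) ≤ 2*s*M - s^2 - D),
      mul_nonneg (sub_pos.2 hsu).le (by linarith : (0:ℝ) ≤ 2*v*M - v^2 - D),
      mul_pos (mul_pos (sub_pos.2 hsu) (sub_pos.2 huv)) (by linarith : (0:ℝ) < v - s)]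
  -- choose the blocking point P
  have key : ∀ p0 p1 : ℝ, pt p0 p1 ∈ insert (pt 0 0) (gadget n x) →
      |p0| + |p1| = u → (p0 - c 0)^2 + (p1 - c 1)^2 ≤ r^2 → False := by
    intro p0 p1 hP hval hdist
    have hPa : pt p0 p1 ≠ a := by
      intro h
      have : |p0| + |p1| = s := by
        rw [hsdef, ← h, pt_zero, pt_one]
      linarith [hsu, hval.symm.trans this]
    have hPb : pt p0 p1 ≠ b := by
      intro h
      have : |p0| + |p1| = v := by
        rw [hvdef, ← h, pt_zero, pt_one]
      linarith [huv, hval.symm.trans this]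
    have hlt := hE (pt p0 p1) hP hPa hPb
    have hle : dist (pt p0 p1) c ≤ r := by
      apply dist_le_of hr0
      simpa [pt_zero, pt_one] using hdist
    linarith
  have hP1 : pt u 0 ∈ insert (pt 0 0) (gadget n x) := by
    right; rw [gadget, Set.mem_iUnion]; exact ⟨k, by simp [hu]⟩
  have hP2 : pt (-u) 0 ∈ insert (pt 0 0) (gadget n x) := by
    right; rw [gadget, Set.mem_iUnion]; exact ⟨k, by simp [hu]⟩
  have hP3 : pt 0 u ∈ insert (pt 0 0) (gadget n x) := by
    right; rw [gadget, Set.mem_iUnion]; exact ⟨k, by simp [hu]⟩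
  have hP4 : pt 0 (-u) ∈ insert (pt 0 0) (gadget n x) := by
    right; rw [gadget, Set.mem_iUnion]; exact ⟨k, by simp [hu]⟩
  have hvu : |u| + |(0:ℝ)| = u := by rw [abs_of_pos hu0, abs_zero, add_zero]
  have hvu' : |(-u)| + |(0:ℝ)| = u := by rw [abs_neg, abs_of_pos hu0, abs_zero, add_zero]
  have hvu2 : |(0:ℝ)| + |u| = u := by rw [abs_of_pos hu0, abs_zero, zero_add]
  have hvu2' : |(0:ℝ)| + |(-u)| = u := by rw [abs_neg, abs_of_pos hu0, abs_zero, zero_add]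
  rcases le_total |c 1| |c 0| with hMc | hMc
  · have hMval : M = |c 0| := by rw [hM, max_eq_left hMc]
    rcases le_total 0 (c 0) with hc | hc
    · exact key u 0 hP1 hvu (by nlinarith [hUu, abs_of_nonneg hc, hMval, sq_nonneg (c 1)])
    · exact key (-u) 0 hP2 hvu' (by nlinarith [hUu, abs_of_nonpos hc, hMval, sq_nonneg (c 1)])
  · have hMval : M = |c 1| := by rw [hM, max_eq_right hMc]
    rcases le_total 0 (c 1) with hc | hc
    · exact key 0 u hP3 hvu2 (by nlinarith [hUu, abs_of_nonneg hc, hMval, sq_nonneg (c 0)])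
    · exact key 0 (-u) hP4 hvu2' (by nlinarith [hUu, abs_of_nonpos hc, hMval, sq_nonneg (c 0)])


-- walk lemmas
lemma walk_of_chain {G : SimpleGraph Pt} (g : ℕ → Pt) :
    ∀ m : ℕ, (∀ i, i < m → G.Adj (g i) (g (i+1))) →
      ∃ w : G.Walk (g 0) (g m), w.length = m := by
  intro m
  induction m with
  | zero => exact fun _ => ⟨SimpleGraph.Walk.nil, rfl⟩
  | succ m ih =>
    intro h
    obtain ⟨w, hw⟩ := ih (fun i hi => h i (by omega))
    exact ⟨w.concat (h m (by omega)), by rw [SimpleGraph.Walk.length_concat, hw]⟩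

lemma walk_fidx {G : SimpleGraph Pt} (f : Pt → ℕ)
    (hstep : ∀ u v, G.Adj u v → f v ≤ f u + 1) :
    ∀ {a b : Pt} (w : G.Walk a b), f b ≤ f a + w.length := by
  intro a b w
  induction w with
  | nil => simp
  | @cons u v b h p ih =>
    have := hstep u v h
    rw [SimpleGraph.Walk.length_cons]
    omega

-- fidx values
lemma fidx_origin {n : ℕ} {x : Fin n → ℝ} (hpos : ∀ i, 0 < x i) :
    fidx n x (pt 0 0) = 0 := by
  classical
  rw [fidx]
  convert Finset.card_empty
  rw [Finset.filter_eq_empty_iff]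
  intro k _
  rw [pt_zero, pt_one]
  simp only [abs_zero, add_zero, not_le]
  exact hpos k

lemma fidx_top {n : ℕ} {x : Fin n → ℝ} (hmono : StrictMono x) (hn : 0 < n) (q : Pt)
    (hval : |q 0| + |q 1| = x ⟨n-1, by omega⟩) : fidx n x q = n := by
  classical
  rw [fidx]
  have : Finset.univ.filter (fun k => x k ≤ |q 0| + |q 1|) = Finset.univ := by
    rw [Finset.filter_true_of_mem]
    intro k _
    rw [hval]
    exact hmono.le_iff_le.2 (by simp [Fin.le_def]; omega)
  rw [this, Finset.card_univ, Fintype.card_fin]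

lemma pt_comb (r q a b c d : ℝ) :
    r • pt a b + q • pt c d = pt (r*a + q*c) (r*b + q*d) := by
  ext i; fin_cases i <;> rfl

lemma seg_mem (d0 d1 X c : ℝ) (hX : 0 < X) (hc : |c| ≤ X) :
    pt (c*d0) (c*d1) ∈ segment ℝ (pt (-X*d0) (-X*d1)) (pt (X*d0) (X*d1)) := by
  obtain ⟨hc1, hc2⟩ := abs_le.1 hc
  refine ⟨(X-c)/(2*X), (X+c)/(2*X), div_nonneg (by linarith) (by linarith),
    div_nonneg (by linarith) (by linarith), by field_simp; ring, ?_⟩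
  rw [pt_comb, pt_inj]
  constructor <;> field_simp <;> ring

lemma linmap0 : IsLinearMap ℝ (fun z : Pt => z 0) := ⟨fun _ _ => rfl, fun _ _ => rfl⟩
lemma linmap1 : IsLinearMap ℝ (fun z : Pt => z 1) := ⟨fun _ _ => rfl, fun _ _ => rfl⟩

lemma hull_last {n : ℕ} {x : Fin n → ℝ} (hpos : ∀ i, 0 < x i) (hmono : StrictMono x)
    (hn : 0 < n) :
    HullVertex (insert (pt 0 0) (gadget n x)) (pt (x ⟨n-1, by omega⟩) 0) := by
  set X : ℝ := x ⟨n-1, by omega⟩ with hX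
  constructor
  · rw [mem_S_iff]; exact Or.inr ⟨⟨n-1, by omega⟩, Or.inl rfl⟩
  · intro hmem
    have hsub : insert (pt 0 0) (gadget n x) \ {pt X 0} ⊆ {z : Pt | z 0 < X} := by
      rintro q ⟨hqS, hq⟩
      rcases mem_S_iff.mp hqS with rfl | ⟨i, rfl | rfl | rfl | rfl⟩
      · show pt 0 0 0 < X
        rw [pt_zero]; exact hpos _
      · show pt (x i) 0 0 < X
        rw [pt_zero]
        have hle : x i ≤ X := hmono.le_iff_le.2 (by simp [Fin.le_def]; omega)
        rcases lt_or_eq_of_le hle with h | h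
        · exact h
        · exact (hq (Set.mem_singleton_iff.2 (by rw [h]))).elim
      · show pt (-(x i)) 0 0 < X
        rw [pt_zero]; have := hpos i; have := hpos (⟨n-1, by omega⟩ : Fin n); linarith
      · show pt 0 (x i) 0 < X
        rw [pt_zero]; exact hpos _
      · show pt 0 (-(x i)) 0 < X
        rw [pt_zero]; exact hpos _
    have hconv := convexHull_min hsub (convex_halfSpace_lt linmap0 X)
    have := hconv hmem
    simp only [Set.mem_setOf_eq, pt_zero] at this
    exact lt_irrefl _ this

lemma hull_outer {n : ℕ} {x : Fin n → ℝ} (hpos : ∀ i, 0 < x i) (hmono : StrictMono x)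
    (hn : 0 < n) (h : Pt)
    (hh : HullVertex (insert (pt 0 0) (gadget n x)) h) :
    h = pt (x ⟨n-1, by omega⟩) 0 ∨ h = pt (-(x ⟨n-1, by omega⟩)) 0 ∨
      h = pt 0 (x ⟨n-1, by omega⟩) ∨ h = pt 0 (-(x ⟨n-1, by omega⟩)) := by
  obtain ⟨hS, hnot⟩ := hh
  set X : ℝ := x ⟨n-1, by omega⟩ with hXdef
  have hX : 0 < X := hpos _
  set S := insert (pt 0 0) (gadget n x) with hSdef
  have hA : pt X 0 ∈ S := mem_S_iff.mpr (Or.inr ⟨⟨n-1, by omega⟩, Or.inl rfl⟩)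
  have hB : pt (-X) 0 ∈ S := mem_S_iff.mpr (Or.inr ⟨⟨n-1, by omega⟩, Or.inr (Or.inl rfl)⟩)
  have hC : pt 0 X ∈ S := mem_S_iff.mpr (Or.inr ⟨⟨n-1, by omega⟩, Or.inr (Or.inr (Or.inl rfl))⟩)
  have hD : pt 0 (-X) ∈ S := mem_S_iff.mpr (Or.inr ⟨⟨n-1, by omega⟩, Or.inr (Or.inr (Or.inr rfl))⟩)
  have horiz : ∀ c : ℝ, |c| < X → pt c 0 ∈ convexHull ℝ (S \ {pt c 0}) := by
    intro c hc
    have hA' : pt X 0 ∈ S \ {pt c 0} := by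
      refine ⟨hA, ?_⟩
      simp only [Set.mem_singleton_iff, pt_inj, not_and]
      intro he
      rw [← he] at hc
      rw [abs_of_pos hX] at hc
      exact absurd rfl (ne_of_lt hc)
    have hB' : pt (-X) 0 ∈ S \ {pt c 0} := by
      refine ⟨hB, ?_⟩
      simp only [Set.mem_singleton_iff, pt_inj, not_and]
      intro he
      rw [← he] at hc
      rw [abs_neg, abs_of_pos hX] at hc
      exact absurd rfl (ne_of_lt hc)
    have hseg := seg_mem 1 0 X c hX hc.le
    simp only [mul_one, mul_zero, neg_mul, neg_zero] at hseg
    exact segment_subset_convexHull hB' hA' hseg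
  have vert : ∀ c : ℝ, |c| < X → pt 0 c ∈ convexHull ℝ (S \ {pt 0 c}) := by
    intro c hc
    have hC' : pt 0 X ∈ S \ {pt 0 c} := by
      refine ⟨hC, ?_⟩
      simp only [Set.mem_singleton_iff, pt_inj, not_and]
      intro _ he
      rw [← he] at hc
      rw [abs_of_pos hX] at hc
      exact absurd rfl (ne_of_lt hc)
    have hD' : pt 0 (-X) ∈ S \ {pt 0 c} := by
      refine ⟨hD, ?_⟩
      simp only [Set.mem_singleton_iff, pt_inj, not_and]
      intro _ he
      rw [← he] at hc
      rw [abs_neg, abs_of_pos hX] at hc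
      exact absurd rfl (ne_of_lt hc)
    have hseg := seg_mem 0 1 X c hX hc.le
    simp only [mul_one, mul_zero, neg_mul, neg_zero] at hseg
    exact segment_subset_convexHull hD' hC' hseg
  have hle : ∀ i : Fin n, x i ≤ X := fun i =>
    hmono.le_iff_le.2 (by simp [Fin.le_def]; omega)
  rcases mem_S_iff.mp hS with rfl | ⟨i, rfl | rfl | rfl | rfl⟩
  · exact absurd (horiz 0 (by rw [abs_zero]; exact hX)) hnot
  · rcases lt_or_eq_of_le (hle i) with hlt | heq
    · exact absurd (horiz (x i) (by rw [abs_of_pos (hpos i)]; exact hlt)) hnot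
    · exact Or.inl (by rw [heq])
  · rcases lt_or_eq_of_le (hle i) with hlt | heq
    · exact absurd (horiz (-(x i)) (by rw [abs_neg, abs_of_pos (hpos i)]; exact hlt)) hnot
    · exact Or.inr (Or.inl (by rw [heq]))
  · rcases lt_or_eq_of_le (hle i) with hlt | heq
    · exact absurd (vert (x i) (by rw [abs_of_pos (hpos i)]; exact hlt)) hnot
    · exact Or.inr (Or.inr (Or.inl (by rw [heq])))
  · rcases lt_or_eq_of_le (hle i) with hlt | heq
    · exact absurd (vert (-(x i)) (by rw [abs_neg, abs_of_pos (hpos i)]; exact hlt)) hnot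
    · exact Or.inr (Or.inr (Or.inr (by rw [heq])))

def lvl (n : ℕ) (x : Fin n → ℝ) : ℕ → ℝ
  | 0 => 0
  | (j+1) => if h : j < n then x ⟨j, h⟩ else 0

lemma dist_outer {n : ℕ} {x : Fin n → ℝ} (hpos : ∀ i, 0 < x i) (hmono : StrictMono x)
    (hn : 0 < n) (d0 d1 : ℝ)
    (hd : (d0 = 1 ∧ d1 = 0) ∨ (d0 = -1 ∧ d1 = 0) ∨ (d0 = 0 ∧ d1 = 1) ∨ (d0 = 0 ∧ d1 = -1)) :
    (DelaunayGraph (insert (pt 0 0) (gadget n x))).dist (pt 0 0)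
      (pt (x ⟨n-1, by omega⟩ * d0) (x ⟨n-1, by omega⟩ * d1)) = n := by
  set X : ℝ := x ⟨n-1, by omega⟩ with hXdef
  have hX : 0 < X := hpos _
  set g : ℕ → Pt := fun j => pt (lvl n x j * d0) (lvl n x j * d1) with hg
  have hadj : ∀ i, i < n → (DelaunayGraph (insert (pt 0 0) (gadget n x))).Adj (g i) (g (i+1)) := by
    intro i hi
    have ht : lvl n x (i+1) = x ⟨i, hi⟩ := by simp [lvl, hi]
    apply adj_consec hpos d0 d1 _ _ hd
    · cases i with
      | zero => exact Or.inl rfl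
      | succ j =>
        right
        refine ⟨⟨j, by omega⟩, ?_⟩
        simp [lvl, (by omega : j < n)]
    · exact ⟨⟨i, hi⟩, ht⟩
    · rw [ht]
      cases i with
      | zero => exact hpos _
      | succ j =>
        have hlv : lvl n x (j+1) = x ⟨j, by omega⟩ := by simp [lvl, (by omega : j < n)]
        rw [hlv]
        exact hmono (by simp [Fin.lt_def])
    · intro k
      rw [ht]
      cases i with
      | zero =>
        right
        exact hmono.le_iff_le.2 (by simp [Fin.le_def])
      | succ j =>
        have hlv : lvl n x (j+1) = x ⟨j, by omega⟩ := by simp [lvl, (by omega : j < n)]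
        rw [hlv]
        rcases le_or_gt (k : ℕ) j with hk | hk
        · exact Or.inl (hmono.le_iff_le.2 (by simp [Fin.le_def]; omega))
        · exact Or.inr (hmono.le_iff_le.2 (by simp [Fin.le_def]; omega))
  obtain ⟨w, hw⟩ := walk_of_chain g n hadj
  have hg0 : g 0 = pt 0 0 := by simp [hg, lvl]
  have hgn : g n = pt (X * d0) (X * d1) := by
    obtain ⟨m, rfl⟩ : ∃ m, n = m + 1 := ⟨n-1, by omega⟩
    have hlv : lvl (m+1) x (m+1) = x ⟨m, by omega⟩ := by simp [lvl]
    rw [hg]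
    simp only [hlv]
    have hXm : X = x ⟨m, by omega⟩ := by
      rw [hXdef]
      exact congrArg x (Fin.ext (show m+1-1 = m by omega))
    rw [hXm]
  let w' := (w.copy hg0 hgn)
  have hw' : w'.length = n := by rw [SimpleGraph.Walk.length_copy, hw]
  have hreach := w'.reachable
  apply le_antisymm
  · have := SimpleGraph.dist_le w'
    omega
  · obtain ⟨wd, hwd⟩ := hreach.exists_walk_length_eq_dist
    have hbound := walk_fidx (fidx n x) (fun u v h => adj_step hpos hmono u v h) wd
    have h0 : fidx n x (pt 0 0) = 0 := fidx_origin hpos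
    have hval : |pt (X * d0) (X * d1) 0| + |pt (X * d0) (X * d1) 1| = x ⟨n-1, by omega⟩ := by
      rw [pt_zero, pt_one, ← hXdef]
      rcases hd with ⟨h1, h2⟩ | ⟨h1, h2⟩ | ⟨h1, h2⟩ | ⟨h1, h2⟩ <;> subst h1 <;> subst h2 <;>
        simp [abs_of_pos hX]
    have hn' : fidx n x (pt (X * d0) (X * d1)) = n := fidx_top hmono hn _ hval
    omega


/-- For distinct positive `x₁ < ⋯ < xₙ`, the Delaunay depth of the origin in
`S ∪ {0}` is `n + 1`. -/
theorem stmt7 (n : ℕ) (x : Fin n → ℝ) (hpos : ∀ i, 0 < x i)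
    (hmono : StrictMono x) :
    delaunayDepth (insert (pt 0 0) (gadget n x)) (pt 0 0) = n + 1 := by

  rcases Nat.eq_zero_or_pos n with rfl | hn
  · have hS : gadget 0 x = ∅ := by simp [gadget]
    rw [delaunayDepth]
    have hset : {d : ℕ | ∃ h : Pt, HullVertex (insert (pt 0 0) (gadget 0 x)) h ∧
        (DelaunayGraph (insert (pt 0 0) (gadget 0 x))).dist (pt 0 0) h = d} = {0} := by
      ext d
      simp only [Set.mem_setOf_eq, Set.mem_singleton_iff]
      constructor
      · rintro ⟨h, hh, rfl⟩
        have hmem := hh.1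
        rw [hS] at hmem
        simp at hmem
        rw [hmem]
        exact SimpleGraph.dist_self
      · rintro rfl
        refine ⟨pt 0 0, ⟨Set.mem_insert _ _, ?_⟩, SimpleGraph.dist_self⟩
        rw [hS]
        simp
    rw [hset, csInf_singleton]
  · have hset : {d : ℕ | ∃ h : Pt, HullVertex (insert (pt 0 0) (gadget n x)) h ∧
        (DelaunayGraph (insert (pt 0 0) (gadget n x))).dist (pt 0 0) h = d} = {n} := by
      ext d
      simp only [Set.mem_setOf_eq, Set.mem_singleton_iff]
      constructor
      · rintro ⟨h, hh, rfl⟩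
        rcases hull_outer hpos hmono hn h hh with rfl | rfl | rfl | rfl
        · simpa using dist_outer hpos hmono hn 1 0 (Or.inl ⟨rfl, rfl⟩)
        · simpa using dist_outer hpos hmono hn (-1) 0 (Or.inr (Or.inl ⟨rfl, rfl⟩))
        · simpa using dist_outer hpos hmono hn 0 1 (Or.inr (Or.inr (Or.inl ⟨rfl, rfl⟩)))
        · simpa using dist_outer hpos hmono hn 0 (-1) (Or.inr (Or.inr (Or.inr ⟨rfl, rfl⟩)))
      · intro hd
        refine ⟨pt (x ⟨n-1, by omega⟩) 0, hull_last hpos hmono hn, ?_⟩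
        have := dist_outer hpos hmono hn 1 0 (Or.inl ⟨rfl, rfl⟩)
        simp only [mul_one, mul_zero] at this
        omega
    rw [delaunayDepth, hset, csInf_singleton]
    omega
end
end
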